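/- Let B be a nonempty finite type and let M be a Coxeter matrix on B with Coxeter group W. If the abelianization of W is isomorphic to Z/2Z, then the simple graph on B with adjacency i ~ j iff i ≠ j and M i j is odd is connected. -/

import Mathlib

private lemma sq_one_zmod2 (x : Multiplicative (ZMod 2) × Multiplicative (ZMod 2)) :
    x ^ 2 = 1 := by
  revert x; decide

/-- If `B` is a nonempty finite type and `M` is a Coxeter matrix on `B` whose
Coxeter group has abelianization isomorphic to `ℤ/2`, then the graph on `B` with adjacency
`i ≠ j` and `M i j` odd is connected. -/
theorem stmt_2 (B : Type*) [Fintype B] [Nonempty B] (M : CoxeterMatrix B)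
    (h : Nonempty (Abelianization M.Group ≃* Multiplicative (ZMod 2))) :
    SimpleGraph.Connected
      { Adj := fun i j => i ≠ j ∧ Odd (M i j)
        symm := ⟨fun i j hij => ⟨hij.1.symm, M.symmetric i j ▸ hij.2⟩⟩
        loopless := ⟨fun i hi => hi.1 rfl⟩ } := by
  set G : SimpleGraph B :=
      { Adj := fun i j => i ≠ j ∧ Odd (M i j)
        symm := ⟨fun i j hij => ⟨hij.1.symm, M.symmetric i j ▸ hij.2⟩⟩
        loopless := ⟨fun i hi => hi.1 rfl⟩ } with hG
  rw [SimpleGraph.connected_iff]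
  refine ⟨fun i₀ j₀ => ?_, ‹_›⟩
  by_contra hnr
  classical
  obtain ⟨e⟩ := h
  -- an abelian group of exponent 2
  set T := Multiplicative (ZMod 2) × Multiplicative (ZMod 2) with hT
  set g : Multiplicative (ZMod 2) := Multiplicative.ofAdd 1 with hg
  set f : B → T := fun i => if G.Reachable i₀ i then (g, 1) else (1, g) with hf
  have hlift : M.IsLiftable f := by
    intro i j
    rcases Nat.even_or_odd (M i j) with he | ho
    · obtain ⟨k, hk⟩ := he
      rw [hk, ← two_mul, pow_mul, sq_one_zmod2, one_pow]
    · have hfij : f i = f j := by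
        rcases eq_or_ne i j with rfl | hne
        · rfl
        · have hadj : G.Adj i j := ⟨hne, ho⟩
          have : G.Reachable i₀ i ↔ G.Reachable i₀ j :=
            ⟨fun hr => hr.trans hadj.reachable, fun hr => hr.trans hadj.symm.reachable⟩
          simp only [hf]
          by_cases hc : G.Reachable i₀ i
          · rw [if_pos hc, if_pos (this.mp hc)]
          · rw [if_neg hc, if_neg (fun hc' => hc (this.mpr hc'))]
      rw [hfij, ← pow_two, sq_one_zmod2, one_pow]
  set φ : M.Group →* T := M.toCoxeterSystem.lift ⟨f, hlift⟩ with hφ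
  have hφs : ∀ i, φ (M.simple i) = f i := fun i =>
    M.toCoxeterSystem.lift_apply_simple hlift i
  set ψ : Abelianization M.Group →* T := Abelianization.lift φ with hψ
  -- the abelianization has two elements, so among three elements two coincide
  have hcard : ∀ x y z : Abelianization M.Group, x = y ∨ x = z ∨ y = z := by
    intro x y z
    by_contra hc
    push_neg at hc
    have : Function.Injective e := e.injective
    have h3 : e x ≠ e y ∧ e x ≠ e z ∧ e y ≠ e z :=
      ⟨fun hh => hc.1 (this hh), fun hh => hc.2.1 (this hh), fun hh => hc.2.2 (this hh)⟩
    revert h3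
    generalize e x = a; generalize e y = b; generalize e z = c
    revert a b c; decide
  have hvi : ψ (Abelianization.of (M.simple i₀)) = (g, 1) := by
    show φ (M.simple i₀) = _
    rw [hφs, hf]; simp [SimpleGraph.Reachable.refl]
  have hvj : ψ (Abelianization.of (M.simple j₀)) = (1, g) := by
    show φ (M.simple j₀) = _
    rw [hφs]; simp only [hf]; rw [if_neg hnr]
  have hone : ψ 1 = 1 := map_one ψ
  have hgne : g ≠ (1 : Multiplicative (ZMod 2)) := by decide
  rcases hcard (Abelianization.of (M.simple i₀)) (Abelianization.of (M.simple j₀)) 1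
      with h1 | h1 | h1
  · have := congrArg ψ h1; rw [hvi, hvj] at this
    exact hgne (congrArg Prod.fst this)
  · have := congrArg ψ h1; rw [hvi, hone] at this
    exact hgne (congrArg Prod.fst this)
  · have := congrArg ψ h1; rw [hvj, hone] at this
    exact hgne (congrArg Prod.snd this)
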